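/- arXiv:1211.0816 — 2 statements merged into one kernel-verified Lean document; each statement's English description precedes it below -/
import Mathlib

section
/- For all n ≥ 0, det((C_{i+j+1} + C_{i+j+2})_{i,j=0}^{n}) = F_{2n+4}, where F_k is the k-th Fibonacci number. -/
/-- Ballot numbers (Catalan triangle). -/
def bb (i k : ℕ) : ℤ := ((2*i+1).choose (i+k+1) : ℤ) - ((2*i+1).choose (i+k+2) : ℤ)

lemma bb_eq_zero {i k : ℕ} (h : i < k) : bb i k = 0 := by
  unfold bb
  rw [Nat.choose_eq_zero_of_lt (by omega), Nat.choose_eq_zero_of_lt (by omega)]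
  simp

lemma bb_diag (i : ℕ) : bb i i = 1 := by
  unfold bb
  rw [show i + i + 1 = 2*i+1 by ring, Nat.choose_self,
    Nat.choose_eq_zero_of_lt (by omega)]
  simp

lemma bb_sub (m k : ℕ) :
    bb m (k+1) = ((2*m+1).choose (m+k+2) : ℤ) - ((2*m+1).choose (m+k+3) : ℤ) := by
  unfold bb; ring_nf

lemma brec0 (m : ℕ) : bb (m+1) 0 = 2 * bb m 0 + bb m 1 := by
  unfold bb
  have h1 : (2*(m+1)+1).choose ((m+1)+0+1) = (2*m+1).choose m + 2 * ((2*m+1).choose (m+1)) + (2*m+1).choose (m+2) := by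
    rw [show 2*(m+1)+1 = (2*m+1)+1+1 by ring, show (m+1)+0+1 = m+2 by ring]
    rw [Nat.choose_succ_succ ((2*m+1)+1) (m+1), Nat.choose_succ_succ (2*m+1) m,
      Nat.choose_succ_succ (2*m+1) (m+1)]
    ring
  have h2 : (2*(m+1)+1).choose ((m+1)+0+2) = (2*m+1).choose (m+1) + 2 * ((2*m+1).choose (m+2)) + (2*m+1).choose (m+3) := by
    rw [show 2*(m+1)+1 = (2*m+1)+1+1 by ring, show (m+1)+0+2 = m+3 by ring]
    rw [Nat.choose_succ_succ ((2*m+1)+1) (m+2), Nat.choose_succ_succ (2*m+1) (m+1),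
      Nat.choose_succ_succ (2*m+1) (m+2)]
    ring
  rw [h1, h2]
  have h3 : (2*m+1).choose m = (2*m+1).choose (m+1) := by
    rw [← Nat.choose_symm (by omega : m ≤ 2*m+1)]
    congr 1; omega
  push_cast [h3]
  ring

lemma brecS (m k : ℕ) :
    bb (m+1) (k+1) = bb m k + 2 * bb m (k+1) + bb m (k+2) := by
  unfold bb
  have h1 : (2*(m+1)+1).choose ((m+1)+(k+1)+1) =
      (2*m+1).choose (m+k+1) + 2 * ((2*m+1).choose (m+k+2)) + (2*m+1).choose (m+k+3) := by
    rw [show 2*(m+1)+1 = (2*m+1)+1+1 by ring, show (m+1)+(k+1)+1 = (m+k+2)+1 by ring]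
    rw [Nat.choose_succ_succ ((2*m+1)+1) (m+k+2), Nat.choose_succ_succ (2*m+1) (m+k+1),
      Nat.choose_succ_succ (2*m+1) (m+k+2)]
    ring
  have h2 : (2*(m+1)+1).choose ((m+1)+(k+1)+2) =
      (2*m+1).choose (m+k+2) + 2 * ((2*m+1).choose (m+k+3)) + (2*m+1).choose (m+k+4) := by
    rw [show 2*(m+1)+1 = (2*m+1)+1+1 by ring, show (m+1)+(k+1)+2 = (m+k+3)+1 by ring]
    rw [Nat.choose_succ_succ ((2*m+1)+1) (m+k+3), Nat.choose_succ_succ (2*m+1) (m+k+2),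
      Nat.choose_succ_succ (2*m+1) (m+k+3)]
    ring
  rw [h1, h2]
  push_cast
  ring

def aA (i k : ℕ) : ℕ := (2*i+1).choose (i+k+1)

def bb' (i k : ℕ) : ℤ := (aA i k : ℤ) - (aA i (k+1) : ℤ)

lemma aA_eq_zero {i k : ℕ} (h : i < k) : aA i k = 0 :=
  Nat.choose_eq_zero_of_lt (by omega)

lemma sum_range_eq_sum_range {f : ℕ → ℤ} {u v : ℕ}
    (h : ∀ k, min u v ≤ k → f k = 0) :
    ∑ k ∈ Finset.range u, f k = ∑ k ∈ Finset.range v, f k := by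
  have h1 : ∑ k ∈ Finset.range (min u v), f k = ∑ k ∈ Finset.range u, f k := by
    apply Finset.sum_subset
    · exact Finset.range_subset_range.2 (min_le_left _ _)
    · intro x hx hx'
      exact h x (le_of_not_gt fun hc => hx' (Finset.mem_range.2 hc))
  have h2 : ∑ k ∈ Finset.range (min u v), f k = ∑ k ∈ Finset.range v, f k := by
    apply Finset.sum_subset
    · exact Finset.range_subset_range.2 (min_le_right _ _)
    · intro x hx hx'
      exact h x (le_of_not_gt fun hc => hx' (Finset.mem_range.2 hc))
  rw [← h1, ← h2]

lemma vander (i j r : ℕ) :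
    ((2*(i+j)+2).choose r : ℤ) =
      ∑ t ∈ Finset.range (r+1), ((2*i+1).choose t * (2*j+1).choose (r - t) : ℤ) := by
  have h := Nat.add_choose_eq (2*i+1) (2*j+1) r
  rw [Finset.Nat.sum_antidiagonal_eq_sum_range_succ_mk] at h
  have h2 : (2*i+1) + (2*j+1) = 2*(i+j)+2 := by ring
  rw [h2] at h
  rw [h]
  push_cast
  rfl

-- V1
lemma vone (i j K : ℕ) (hi : i ≤ K) :
    ((2*(i+j)+2).choose (i+j+1) : ℤ) =
      2 * ∑ k ∈ Finset.range (K+1), (aA i k * aA j k : ℤ) := by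
  rw [vander i j (i+j+1)]
  have hsplit : i+j+1+1 = (i+1) + (j+1) := by ring
  rw [hsplit, Finset.sum_range_add]
  have hfirst : ∑ t ∈ Finset.range (i+1), ((2*i+1).choose t * (2*j+1).choose (i+j+1 - t) : ℤ)
      = ∑ s ∈ Finset.range (i+1), (aA i s * aA j s : ℤ) := by
    rw [← Finset.sum_range_reflect]
    apply Finset.sum_congr rfl
    intro s hs
    have hs' : s ≤ i := by simpa [Nat.lt_succ_iff] using hs
    have e0 : i + 1 - 1 - s = i - s := by omega
    rw [e0]
    have e1 : (2*i+1).choose (i - s) = aA i s := by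
      unfold aA
      rw [← Nat.choose_symm (by omega : i - s ≤ 2*i+1)]
      congr 1; omega
    have e2 : (2*j+1).choose (i+j+1 - (i - s)) = aA j s := by
      unfold aA
      congr 1; omega
    rw [e1, e2]
  have hsecond : ∑ k ∈ Finset.range (j+1), ((2*i+1).choose (i+1+k) * (2*j+1).choose (i+j+1 - (i+1+k)) : ℤ)
      = ∑ k ∈ Finset.range (j+1), (aA i k * aA j k : ℤ) := by
    apply Finset.sum_congr rfl
    intro k hk
    have hk' : k ≤ j := by simpa [Nat.lt_succ_iff] using hk
    have e1 : (2*i+1).choose (i+1+k) = aA i k := by unfold aA; congr 1; omega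
    have e2 : (2*j+1).choose (i+j+1 - (i+1+k)) = aA j k := by
      unfold aA
      rw [show i+j+1 - (i+1+k) = j - k by omega]
      rw [← Nat.choose_symm (by omega : j - k ≤ 2*j+1)]
      congr 1; omega
    rw [e1, e2]
  rw [hfirst, hsecond]
  have z : ∀ u, (∀ k, min u (K+1) ≤ k → (aA i k * aA j k : ℤ) = 0) →
      ∑ k ∈ Finset.range u, (aA i k * aA j k : ℤ) = ∑ k ∈ Finset.range (K+1), (aA i k * aA j k : ℤ) :=
    fun u h => sum_range_eq_sum_range h
  rw [z (i+1) ?_, z (j+1) ?_]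
  · ring
  all_goals
    intro k hk
    rcases min_le_iff.mp hk with h' | h' <;>
    first
      | (rw [aA_eq_zero (show i < k by omega)]; simp)
      | (rw [aA_eq_zero (show j < k by omega)]; simp)
-- V2
lemma vtwo (i j K : ℕ) (hi : i ≤ K) :
    ((2*(i+j)+2).choose (i+j) : ℤ) =
      (aA i 0 * aA j 0 : ℤ)
      + ∑ k ∈ Finset.range (K+1), (aA i (k+1) * aA j k : ℤ)
      + ∑ k ∈ Finset.range (K+1), (aA i k * aA j (k+1) : ℤ) := by
  rw [vander i j (i+j)]
  have hsplit : i+j+1 = (i+1) + j := by ring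
  rw [hsplit, Finset.sum_range_add]
  have hfirst : ∑ t ∈ Finset.range (i+1), ((2*i+1).choose t * (2*j+1).choose (i+j - t) : ℤ)
      = (aA i 0 * aA j 0 : ℤ) + ∑ k ∈ Finset.range i, (aA i (k+1) * aA j k : ℤ) := by
    rw [← Finset.sum_range_reflect, Finset.sum_range_succ']
    have h0 : ((2*i+1).choose (i+1-1-0) * (2*j+1).choose (i+j - (i+1-1-0)) : ℤ)
        = (aA i 0 * aA j 0 : ℤ) := by
      have e1 : (2*i+1).choose (i+1-1-0) = aA i 0 := by
        unfold aA
        rw [show i+1-1-0 = i by omega, ← Nat.choose_symm (by omega : i ≤ 2*i+1)]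
        congr 1; omega
      have e2 : (2*j+1).choose (i+j - (i+1-1-0)) = aA j 0 := by
        unfold aA
        rw [show i+j - (i+1-1-0) = j by omega, ← Nat.choose_symm (by omega : j ≤ 2*j+1)]
        congr 1; omega
      rw [e1, e2]
    have hk : ∀ k ∈ Finset.range i,
        ((2*i+1).choose (i+1-1-(k+1)) * (2*j+1).choose (i+j - (i+1-1-(k+1))) : ℤ)
        = (aA i (k+1) * aA j k : ℤ) := by
      intro k hk
      have hk' : k < i := by simpa using hk
      have e1 : (2*i+1).choose (i+1-1-(k+1)) = aA i (k+1) := by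
        unfold aA
        rw [show i+1-1-(k+1) = i - (k+1) by omega,
          ← Nat.choose_symm (by omega : i - (k+1) ≤ 2*i+1)]
        congr 1; omega
      have e2 : (2*j+1).choose (i+j - (i+1-1-(k+1))) = aA j k := by
        unfold aA
        congr 1; omega
      rw [e1, e2]
    rw [Finset.sum_congr rfl hk, h0]
    ring
  have hsecond : ∑ k ∈ Finset.range j, ((2*i+1).choose (i+1+k) * (2*j+1).choose (i+j - (i+1+k)) : ℤ)
      = ∑ k ∈ Finset.range j, (aA i k * aA j (k+1) : ℤ) := by
    apply Finset.sum_congr rfl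
    intro k hk
    have hk' : k < j := by simpa using hk
    have e1 : (2*i+1).choose (i+1+k) = aA i k := by unfold aA; congr 1; omega
    have e2 : (2*j+1).choose (i+j - (i+1+k)) = aA j (k+1) := by
      unfold aA
      rw [show i+j - (i+1+k) = j - (k+1) by omega]
      rw [← Nat.choose_symm (by omega : j - (k+1) ≤ 2*j+1)]
      congr 1; omega
    rw [e1, e2]
  rw [hfirst, hsecond]
  have zR : ∑ k ∈ Finset.range i, (aA i (k+1) * aA j k : ℤ)
      = ∑ k ∈ Finset.range (K+1), (aA i (k+1) * aA j k : ℤ) := by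
    apply sum_range_eq_sum_range
    intro k hk
    rcases min_le_iff.mp hk with h' | h' <;>
      (rw [aA_eq_zero (show i < k+1 by omega)]; simp)
  have zQ : ∑ k ∈ Finset.range j, (aA i k * aA j (k+1) : ℤ)
      = ∑ k ∈ Finset.range (K+1), (aA i k * aA j (k+1) : ℤ) := by
    apply sum_range_eq_sum_range
    intro k hk
    rcases min_le_iff.mp hk with h' | h' <;>
    first
      | (rw [aA_eq_zero (show j < k+1 by omega)]; simp)
      | (rw [aA_eq_zero (show i < k by omega)]; simp)
  rw [zR, zQ]

lemma catalan_diff (m : ℕ) :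
    (catalan (m+1) : ℤ) = ((2*(m+1)).choose (m+1) : ℤ) - ((2*m+2).choose m : ℤ) := by
  have hc : ((m:ℤ)+2) * catalan (m+1) = ((2*(m+1)).choose (m+1) : ℤ) := by
    have := succ_mul_catalan_eq_centralBinom (m+1)
    have h2 : Nat.centralBinom (m+1) = (2*(m+1)).choose (m+1) := rfl
    rw [h2] at this
    exact_mod_cast congrArg (Nat.cast : ℕ → ℤ) this
  have hr : ((2*m+2).choose (m+1) : ℤ) * ((m:ℤ)+1) = ((2*m+2).choose m : ℤ) * ((m:ℤ)+2) := by
    have := Nat.choose_succ_right_eq (2*m+2) m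
    have h2 : 2*m+2 - m = m + 2 := by omega
    rw [h2] at this
    exact_mod_cast congrArg (Nat.cast : ℕ → ℤ) this
  have hA : ((2*(m+1)).choose (m+1) : ℤ) = ((2*m+2).choose (m+1) : ℤ) := by rw [show 2*(m+1) = 2*m+2 by ring]
  apply mul_left_cancel₀ (show ((m:ℤ)+2) ≠ 0 by positivity)
  rw [hc]
  rw [hA]
  nlinarith [hr]
lemma bb_eq_aA (i k : ℕ) : bb i k = (aA i k : ℤ) - (aA i (k+1) : ℤ) := by
  unfold bb aA
  congr 3 <;> omega

lemma bb_conv (i j K : ℕ) (hi : i ≤ K) :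
    ∑ k ∈ Finset.range (K+1), bb i k * bb j k = (catalan (i+j+1) : ℤ) := by
  have expand : ∀ k ∈ Finset.range (K+1), bb i k * bb j k =
      ((aA i k * aA j k : ℤ) + (aA i (k+1) * aA j (k+1) : ℤ))
      - ((aA i (k+1) * aA j k : ℤ) + (aA i k * aA j (k+1) : ℤ)) := by
    intro k _
    rw [bb_eq_aA, bb_eq_aA]
    push_cast
    ring
  rw [Finset.sum_congr rfl expand, Finset.sum_sub_distrib, Finset.sum_add_distrib,
    Finset.sum_add_distrib]
  have e1 : ∑ k ∈ Finset.range (K+1), (aA i (k+1) * aA j (k+1) : ℤ)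
      = ∑ k ∈ Finset.range (K+1), (aA i k * aA j k : ℤ) - (aA i 0 * aA j 0 : ℤ) := by
    have h1 := Finset.sum_range_succ' (fun k => (aA i k * aA j k : ℤ)) (K+1)
    have h2 := Finset.sum_range_succ (fun k => (aA i k * aA j k : ℤ)) (K+1)
    have h3 : (aA i (K+1) : ℤ) = 0 := by
      rw [aA_eq_zero (show i < K+1 by omega)]; simp
    simp only [h3, zero_mul, add_zero] at h2
    rw [h2] at h1
    linarith
  rw [e1]
  have hv1 := vone i j K hi
  have hv2 := vtwo i j K hi
  have hcat := catalan_diff (i+j)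
  rw [show 2*((i+j)+1) = 2*(i+j)+2 by ring] at hcat
  rw [show i+j+1 = (i+j)+1 by ring, hcat]
  linarith
lemma fib_jump (k : ℕ) :
    (Nat.fib (2*k+4) : ℤ) = 3 * (Nat.fib (2*k+2):ℤ) - (Nat.fib (2*k):ℤ) := by
  have h1 : Nat.fib (2*k+2) = Nat.fib (2*k) + Nat.fib (2*k+1) := Nat.fib_add_two
  have h2 : Nat.fib (2*k+3) = Nat.fib (2*k+1) + Nat.fib (2*k+2) := Nat.fib_add_two
  have h3 : Nat.fib (2*k+4) = Nat.fib (2*k+2) + Nat.fib (2*k+3) := Nat.fib_add_two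
  push_cast [h3, h2, h1]
  ring

lemma Ssum (m : ℕ) :
    ∑ k ∈ Finset.range (m+1), (-1:ℤ)^(m+k) * bb m k * (Nat.fib (2*k+2):ℤ) = 1 := by
  induction m with
  | zero => simp [bb_diag]
  | succ m ih =>
    set G : ℕ → ℤ := fun k => (-1:ℤ)^(m+k) * bb m k * (Nat.fib (2*k+2):ℤ) with hG
    set H : ℕ → ℤ := fun k => (-1:ℤ)^(m+k) * bb m k * (Nat.fib (2*k):ℤ) with hH
    have hGm : G (m+1) = 0 := by simp [hG, bb_eq_zero (show m < m+1 by omega)]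
    have hHm1 : H (m+1) = 0 := by simp [hH, bb_eq_zero (show m < m+1 by omega)]
    have hHm2 : H (m+2) = 0 := by simp [hH, bb_eq_zero (show m < m+2 by omega)]
    have hH0 : H 0 = 0 := by simp [hH]
    have sumG : ∑ k ∈ Finset.range (m+1), G k = 1 := ih
    have sumG1 : ∑ k ∈ Finset.range (m+1), G (k+1) = 1 - G 0 := by
      have h1 := Finset.sum_range_succ' G (m+1)
      have h2 := Finset.sum_range_succ G (m+1)
      rw [hGm, add_zero] at h2
      rw [h2, sumG] at h1
      linarith
    have sumH2 : ∑ k ∈ Finset.range (m+1), H (k+2) =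
        (∑ k ∈ Finset.range (m+1), H k) - H 1 := by
      have h1 := Finset.sum_range_succ' H (m+2)
      have h1' := Finset.sum_range_succ' (fun k => H (k+1)) (m+1)
      have h2 := Finset.sum_range_succ H (m+2)
      have h3 := Finset.sum_range_succ H (m+1)
      rw [hHm2, add_zero] at h2
      rw [hHm1, add_zero] at h3
      rw [h3] at h2
      rw [h2, h1', hH0, add_zero] at h1
      linarith
    rw [Finset.sum_range_succ']
    have step : ∀ k ∈ Finset.range (m+1),
        (-1:ℤ)^(m+1+(k+1)) * bb (m+1) (k+1) * (Nat.fib (2*(k+1)+2):ℤ)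
        = (3 * G k - H k) - 2 * G (k+1) + H (k+2) := by
      intro k _
      rw [brecS]
      have e4 : (2*(k+1)+2) = 2*k+4 := by ring
      rw [e4, fib_jump k]
      simp only [hG, hH]
      have hs : (-1:ℤ)^(m+1+(k+1)) = (-1:ℤ)^(m+k) := by
        rw [show m+1+(k+1) = (m+k)+2 by ring, pow_add]
        norm_num
      have hs2 : (-1:ℤ)^(m+(k+1)) = -(-1:ℤ)^(m+k) := by
        rw [show m+(k+1) = (m+k)+1 by ring, pow_succ]
        ring
      have hs3 : (-1:ℤ)^(m+(k+2)) = (-1:ℤ)^(m+k) := by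
        rw [show m+(k+2) = (m+k)+2 by ring, pow_add]
        norm_num
      rw [hs, hs2, hs3]
      have e5 : (2*(k+1)+2) = 2*(k+2) := by ring
      rw [e5, show (2*(k+2)) = 2*k+4 by ring, fib_jump k]
      ring
    rw [Finset.sum_congr rfl step]
    have split : ∑ k ∈ Finset.range (m+1), ((3 * G k - H k) - 2 * G (k+1) + H (k+2))
        = 3 * (∑ k ∈ Finset.range (m+1), G k) - (∑ k ∈ Finset.range (m+1), H k)
          - 2 * (∑ k ∈ Finset.range (m+1), G (k+1)) + ∑ k ∈ Finset.range (m+1), H (k+2) := by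
      rw [Finset.sum_add_distrib, Finset.sum_sub_distrib, Finset.sum_sub_distrib,
        ← Finset.mul_sum, ← Finset.mul_sum]
    rw [split, sumG, sumG1, sumH2]
    have hfib2 : (Nat.fib (2*0+2) : ℤ) = 1 := by norm_num
    have hG0 : G 0 = (-1:ℤ)^m * bb m 0 := by
      simp only [hG, add_zero]
      rw [show (2*0+2) = 2 by norm_num]
      norm_num
    have hH1 : H 1 = -((-1:ℤ)^m * bb m 1) := by
      simp only [hH]
      rw [show (2*1) = 2 by norm_num, pow_succ]
      norm_num
    rw [hfib2, hG0, hH1, brec0, show m+1+0 = m+1 by ring, pow_succ]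
    ring
def Nrow (p k : ℕ) : ℤ := bb p k + bb (p+1) k

lemma Nrow_eq_zero {p k : ℕ} (h : p + 1 < k) : Nrow p k = 0 := by
  unfold Nrow
  rw [bb_eq_zero (by omega), bb_eq_zero (by omega)]
  ring

lemma Nrow_super (q : ℕ) : Nrow q (q+1) = 1 := by
  unfold Nrow
  rw [bb_eq_zero (by omega), bb_diag]
  ring

noncomputable def dd (q : ℕ) : ℤ := (Matrix.of fun i j : Fin q => Nrow i j).det

noncomputable def Tmat (p q : ℕ) : Matrix (Fin (q+1)) (Fin (q+1)) ℤ :=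
  Matrix.of fun i j => Nrow (if (i:ℕ) = q then p else (i:ℕ)) (j:ℕ)

lemma dd_zero : dd 0 = 1 := Matrix.det_fin_zero

lemma dd_succ (q : ℕ) : dd (q+1) = (Tmat q q).det := by
  unfold dd Tmat
  congr 1
  ext i j
  simp only [Matrix.of_apply]
  by_cases h : (i:ℕ) = q
  · rw [if_pos h, h]
  · rw [if_neg h]

lemma Tdet (q : ℕ) : ∀ p, (Tmat p q).det
    = ∑ k ∈ Finset.range (q+1), (-1:ℤ)^(q+k) * Nrow p k * dd k := by
  induction q with
  | zero =>
    intro p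
    rw [show (Tmat p 0).det = Tmat p 0 0 0 from Matrix.det_fin_one _,
      Finset.sum_range_one, dd_zero]
    simp [Tmat]
  | succ q ih =>
    intro p
    rw [Matrix.det_succ_column (Tmat p (q+1)) (Fin.last (q+1))]
    set f : Fin (q+2) → ℤ := fun i =>
      (-1:ℤ)^((i:ℕ) + ((Fin.last (q+1)):ℕ)) * Tmat p (q+1) i (Fin.last (q+1)) *
        ((Tmat p (q+1)).submatrix i.succAbove (Fin.last (q+1)).succAbove).det with hf
    have i1lt : q < q + 2 := by omega
    set i1 : Fin (q+2) := ⟨q, i1lt⟩ with hi1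
    set i2 : Fin (q+2) := Fin.last (q+1) with hi2
    have hne : i1 ≠ i2 := by
      simp only [hi1, hi2, Fin.ne_iff_vne, Fin.val_last]
      omega
    have hz : ∀ i ∈ (Finset.univ : Finset (Fin (q+2))), i ∉ ({i1, i2} : Finset (Fin (q+2))) →
        f i = 0 := by
      intro i _ hi
      simp only [Finset.mem_insert, Finset.mem_singleton, hi1, hi2] at hi
      push_neg at hi
      have hv1 : (i:ℕ) ≠ q := fun hc => hi.1 (Fin.ext hc)
      have hv2 : (i:ℕ) ≠ q+1 := fun hc => hi.2 (Fin.ext (by simpa [Fin.val_last] using hc))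
      have hlt : (i:ℕ) < q := by have := i.isLt; omega
      have hz0 : Tmat p (q+1) i (Fin.last (q+1)) = 0 := by
        simp only [Tmat, Matrix.of_apply, Fin.val_last]
        rw [if_neg (by omega)]
        exact Nrow_eq_zero (by omega)
      simp only [hf, hi2, hz0]
      ring
    have hcollapse : ∑ i : Fin (q+2), f i = f i1 + f i2 := by
      rw [← Finset.sum_subset (Finset.subset_univ ({i1, i2} : Finset (Fin (q+2)))) hz]
      rw [Finset.sum_pair hne]
    rw [hcollapse]
    -- term i2
    have e2 : f i2 = Nrow p (q+1) * dd (q+1) := by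
      have hm2 : (Tmat p (q+1)).submatrix i2.succAbove (Fin.last (q+1)).succAbove
          = Matrix.of fun i j : Fin (q+1) => Nrow i j := by
        ext i j
        simp only [hi2, Matrix.submatrix_apply, Fin.succAbove_last, Tmat, Matrix.of_apply,
          Fin.coe_castSucc]
        rw [if_neg (by have := i.isLt; omega)]
      have hent : Tmat p (q+1) i2 (Fin.last (q+1)) = Nrow p (q+1) := by
        simp only [hi2, Tmat, Matrix.of_apply, Fin.val_last]
        simp
      simp only [hf, hm2, hent, hi2, Fin.val_last]
      have : ((-1:ℤ))^((q+1) + (q+1)) = 1 := Even.neg_one_pow ⟨q+1, by ring⟩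
      rw [this, one_mul]
      rw [hi2] at hm2 hent
      rw [hent, hm2]
      rfl
    -- term i1
    have e1 : f i1 = -(Tmat p q).det := by
      have hm1 : (Tmat p (q+1)).submatrix i1.succAbove (Fin.last (q+1)).succAbove
          = Tmat p q := by
        ext i j
        simp only [Matrix.submatrix_apply, Fin.succAbove_last, Tmat, Matrix.of_apply,
          Fin.coe_castSucc]
        by_cases h : (i:ℕ) < q
        · rw [Fin.succAbove_of_castSucc_lt i1 i (by
            simp only [Fin.lt_def, Fin.coe_castSucc, hi1]; exact h)]
          simp only [Fin.coe_castSucc]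
          rw [if_neg (by omega), if_neg (by omega)]
        · have hiq : (i:ℕ) = q := by have := i.isLt; omega
          rw [Fin.succAbove_of_le_castSucc i1 i (by
            simp only [Fin.le_def, Fin.coe_castSucc, hi1]; omega)]
          simp only [Fin.val_succ]
          rw [if_pos (by omega), if_pos hiq]
      have hent : Tmat p (q+1) i1 (Fin.last (q+1)) = 1 := by
        simp only [hi1, Tmat, Matrix.of_apply, Fin.val_last]
        rw [if_neg (by omega)]
        exact Nrow_super q
      simp only [hf, hm1, hent, hi1, hi2, Fin.val_last]
      have : ((-1:ℤ))^(q + (q+1)) = -1 := Odd.neg_one_pow ⟨q, by ring⟩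
      rw [this]
      rw [hi1] at hm1 hent
      rw [hm1, hent]
      ring
    rw [e1, e2]
    have hsg : ∀ k ∈ Finset.range (q+1),
        (-1:ℤ)^(q+1+k) * Nrow p k * dd k = -((-1:ℤ)^(q+k) * Nrow p k * dd k) := by
      intro k _
      rw [show q+1+k = (q+k)+1 by ring, pow_succ]
      ring
    have hR : ∑ k ∈ Finset.range (q+1+1), (-1:ℤ)^(q+1+k) * Nrow p k * dd k
        = -(∑ k ∈ Finset.range (q+1), (-1:ℤ)^(q+k) * Nrow p k * dd k)
          + Nrow p (q+1) * dd (q+1) := by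
      rw [Finset.sum_range_succ, Finset.sum_congr rfl hsg, Finset.sum_neg_distrib]
      have : ((-1:ℤ))^(q+1+(q+1)) = 1 := Even.neg_one_pow ⟨q+1, by ring⟩
      rw [this]
      ring
    rw [hR, ← ih p]
lemma dd_fib : ∀ q, dd q = (Nat.fib (2*q+2) : ℤ) := by
  intro q
  induction q using Nat.strong_induction_on with
  | _ q ih =>
    match q with
    | 0 =>
      rw [dd_zero]
      norm_num
    | (q+1) =>
      rw [dd_succ, Tdet]
      have hstep : ∀ k ∈ Finset.range (q+1), (-1:ℤ)^(q+k) * Nrow q k * dd k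
          = (-1:ℤ)^(q+k) * bb q k * (Nat.fib (2*k+2):ℤ)
            + (-1:ℤ)^(q+k) * bb (q+1) k * (Nat.fib (2*k+2):ℤ) := by
        intro k hk
        rw [ih k (by simp at hk; omega)]
        unfold Nrow
        ring
      rw [Finset.sum_congr rfl hstep, Finset.sum_add_distrib, Ssum q]
      have h2 := Ssum (q+1)
      rw [Finset.sum_range_succ] at h2
      have hsg : ∀ k ∈ Finset.range (q+1),
          (-1:ℤ)^(q+1+k) * bb (q+1) k * (Nat.fib (2*k+2):ℤ)
          = -((-1:ℤ)^(q+k) * bb (q+1) k * (Nat.fib (2*k+2):ℤ)) := by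
        intro k _
        rw [show q+1+k = (q+k)+1 by ring, pow_succ]
        ring
      rw [Finset.sum_congr rfl hsg, Finset.sum_neg_distrib, bb_diag] at h2
      have hev : ((-1:ℤ))^(q+1+(q+1)) = 1 := Even.neg_one_pow ⟨q+1, by ring⟩
      rw [hev] at h2
      linarith

theorem hankel_shifted_catalan_sum_det_fib (n : ℕ) :
    (Matrix.of fun i j : Fin (n + 1) =>
      (catalan ((i : ℕ) + (j : ℕ) + 1) + catalan ((i : ℕ) + (j : ℕ) + 2) : ℤ)).det
      = Nat.fib (2 * n + 4) := by
  set L : Matrix (Fin (n+1)) (Fin (n+1)) ℤ :=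
    Matrix.of fun i k => bb (i:ℕ) (k:ℕ) with hLdef
  set NT : Matrix (Fin (n+1)) (Fin (n+1)) ℤ :=
    Matrix.of fun k j => Nrow (j:ℕ) (k:ℕ) with hNTdef
  have hM : (Matrix.of fun i j : Fin (n + 1) =>
      (catalan ((i : ℕ) + (j : ℕ) + 1) + catalan ((i : ℕ) + (j : ℕ) + 2) : ℤ)) = L * NT := by
    ext i j
    rw [Matrix.mul_apply]
    simp only [Matrix.of_apply, hLdef, hNTdef]
    have hterm : ∀ k : Fin (n+1),
        bb (i:ℕ) (k:ℕ) * Nrow (j:ℕ) (k:ℕ)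
        = bb (i:ℕ) (k:ℕ) * bb (j:ℕ) (k:ℕ) + bb (i:ℕ) (k:ℕ) * bb ((j:ℕ)+1) (k:ℕ) := by
      intro k
      unfold Nrow
      ring
    rw [Finset.sum_congr rfl (fun k _ => hterm k), Finset.sum_add_distrib]
    rw [Fin.sum_univ_eq_sum_range (fun k => bb (i:ℕ) k * bb (j:ℕ) k) (n+1)]
    rw [Fin.sum_univ_eq_sum_range (fun k => bb (i:ℕ) k * bb ((j:ℕ)+1) k) (n+1)]
    rw [bb_conv (i:ℕ) (j:ℕ) n (by omega : (i:ℕ) ≤ n),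
      bb_conv (i:ℕ) ((j:ℕ)+1) n (by omega : (i:ℕ) ≤ n)]
    rw [show (i:ℕ) + ((j:ℕ)+1) + 1 = (i:ℕ) + (j:ℕ) + 2 by ring]
  rw [hM, Matrix.det_mul]
  have hL : L.det = 1 := by
    rw [Matrix.det_of_lowerTriangular L (by
      intro i j hij
      have hij' : i < j := hij
      simp only [hLdef, Matrix.of_apply]
      exact bb_eq_zero hij')]
    have : ∀ i : Fin (n+1), L i i = 1 := by
      intro i
      simp only [hLdef, Matrix.of_apply]
      exact bb_diag i
    simp [this]
  have hNT : NT.det = dd (n+1) := by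
    have h : NT = Matrix.transpose (Matrix.of fun i j : Fin (n+1) => Nrow (i:ℕ) (j:ℕ)) := by
      ext i j
      rfl
    rw [h, Matrix.det_transpose]
    rfl
  rw [hL, hNT, one_mul, dd_fib (n+1), show 2*(n+1)+2 = 2*n+4 by ring]
end

section
/- Define Motzkin polynomials M_n(u) as the moments satisfying: the orthogonal polynomials P_n(x) = F_{n+1}(x−u, −1) with linear functional F_u(x^n) = M_n(u), F_u(P_n) = [n=0]. Equivalently, M_n(u) = Σ over Motzkin paths of length n weighted u^{#level steps}. Then det((M_{i+j+1}(u))_{i,j=0}^{n}) = F_{n+2}(u, −1), where F_m(x,s) are the Fibonacci polynomials. -/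
open Polynomial Finset



def mc : ℕ → ℕ → ℤ
  | 0, 0 => 1
  | 0, _+1 => 0
  | n+1, 0 => mc n 1
  | n+1, k+1 => mc n k + mc n (k+2)

def mg (n k : ℕ) : ℤ :=
  if k ≤ n ∧ (n - k) % 2 = 0 then
    ((n.choose ((n - k) / 2) : ℤ) - (n.choose ((n + k) / 2 + 1) : ℤ)) else 0

lemma mg_rec0 (n : ℕ) : mg (n+1) 0 = mg n 1 := by
  unfold mg
  simp only [Nat.sub_zero, Nat.add_zero]
  rcases Nat.even_or_odd n with he | ho
  · obtain ⟨t, ht⟩ := he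
    rw [if_neg (by omega), if_neg (by omega)]
  · obtain ⟨t, ht⟩ := ho
    rw [if_pos (by omega), if_pos (by omega)]
    have e1 : (n + 1) / 2 = t + 1 := by omega
    have e2 : (n + 1) / 2 + 1 = t + 2 := by omega
    have e3 : (n - 1) / 2 = t := by omega
    have e4 : (n + 1) / 2 + 1 = t + 2 := by omega
    rw [e1, e3]
    have hn : n = 2 * t + 1 := ht
    subst hn
    rw [Nat.choose_succ_succ (2*t+1) t, Nat.choose_succ_succ (2*t+1) (t+1)]
    push_cast
    ring

lemma mg_recS (n k : ℕ) : mg (n+1) (k+1) = mg n k + mg n (k+2) := by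
  unfold mg
  simp only [Nat.succ_sub_succ]
  by_cases hk : k ≤ n
  · by_cases hp : (n - k) % 2 = 0
    · rcases Nat.lt_or_ge (k+1) n with hlt | hge
      · -- k + 2 ≤ n
        obtain ⟨j, hj⟩ : ∃ j, n = k + 2 * (j + 1) := by
          refine ⟨(n - k)/2 - 1, by omega⟩
        rw [if_pos (by omega), if_pos (by omega), if_pos (by omega)]
        have e1 : (n - k) / 2 = j + 1 := by omega
        have e2 : (n + k) / 2 + 1 = k + j + 2 := by omega
        have e3 : (n - (k + 2)) / 2 = j := by omega
        have e4 : (n + (k + 2)) / 2 + 1 = k + j + 3 := by omega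
        have e5 : (n + 1 + (k + 1)) / 2 + 1 = k + j + 3 := by omega
        rw [e1, e2, e3, e4, e5]
        have hn : n = k + 2 * (j+1) := hj
        subst hn
        have p1 : (k+2*(j+1)+1).choose (j+1)
            = (k+2*(j+1)).choose j + (k+2*(j+1)).choose (j+1) :=
          Nat.choose_succ_succ _ _
        have p2 : (k+2*(j+1)+1).choose (k+j+3)
            = (k+2*(j+1)).choose (k+j+2) + (k+2*(j+1)).choose (k+j+3) := by
          have := Nat.choose_succ_succ (k+2*(j+1)) (k+j+2)
          simpa using this
        rw [p1, p2]
        push_cast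
        ring
      · -- k = n or k + 1 = n; with parity, k = n
        have hkn : k = n := by omega
        subst hkn
        rw [if_pos (by omega), if_pos (by omega), if_neg (by omega)]
        have e1 : (k - k) / 2 = 0 := by omega
        have e2 : (k + k) / 2 + 1 = k + 1 := by omega
        have e3 : (k + 1 + (k + 1)) / 2 + 1 = k + 2 := by omega
        rw [e1, e2, e3]
        simp [Nat.choose_eq_zero_of_lt]
    · rw [if_neg (by omega), if_neg (by omega), if_neg (by omega)]
      simp
  · rw [if_neg (by omega), if_neg (by omega), if_neg (by omega)]
    simp

lemma mc_eq_mg : ∀ n k, mc n k = mg n k := by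
  intro n
  induction n with
  | zero =>
    intro k
    match k with
    | 0 => simp [mc, mg]
    | k+1 => simp [mc, mg]
  | succ n ih =>
    intro k
    match k with
    | 0 => rw [mc, ih, mg_rec0]
    | k+1 => rw [mc, ih, ih, mg_recS]

lemma mg_def (n k : ℕ) : mg n k =
  if k ≤ n ∧ (n - k) % 2 = 0 then
    ((n.choose ((n - k) / 2) : ℤ) - (n.choose ((n + k) / 2 + 1) : ℤ)) else 0 := rfl


lemma mc_eq_zero_of_lt {n k : ℕ} (h : n < k) : mc n k = 0 := by
  rw [mc_eq_mg, mg_def, if_neg (by omega)]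

lemma mc_self (n : ℕ) : mc n n = 1 := by
  rw [mc_eq_mg, mg_def, if_pos (by omega)]
  have e1 : (n - n) / 2 = 0 := by omega
  rw [e1]
  have e2 : (n + n) / 2 + 1 = n + 1 := by omega
  rw [e2, Nat.choose_zero_right, Nat.choose_eq_zero_of_lt (by omega)]
  simp

lemma mc_even_zero (j : ℕ) : mc (2 * j) 0 = catalan j := by
  rw [mc_eq_mg, mg_def, if_pos (by omega)]
  have e1 : (2 * j - 0) / 2 = j := by omega
  have e2 : (2 * j + 0) / 2 + 1 = j + 1 := by omega
  rw [e1, e2]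
  have h1 : (j + 1) * catalan j = (2 * j).choose j := by
    rw [succ_mul_catalan_eq_centralBinom, Nat.centralBinom]
  have h2 : (2 * j).choose (j + 1) * (j + 1) = (2 * j).choose j * j := by
    have := Nat.choose_succ_right_eq (2 * j) j
    have e : 2 * j - j = j := by omega
    rwa [e] at this
  have h1' : ((j : ℤ) + 1) * catalan j = (2 * j).choose j := by exact_mod_cast h1
  have h2' : ((2 * j).choose (j + 1) : ℤ) * ((j : ℤ) + 1) = ((2 * j).choose j : ℤ) * j := by
    exact_mod_cast h2
  have key : ((j : ℤ) + 1) * (((2 * j).choose j : ℤ) - (2 * j).choose (j + 1))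
      = ((j : ℤ) + 1) * catalan j := by
    rw [h1']; nlinarith [h2']
  exact mul_left_cancel₀ (by positivity) key

lemma mc_odd_zero (n : ℕ) (h : n % 2 = 1) : mc n 0 = 0 := by
  rw [mc_eq_mg, mg_def, if_neg (by omega)]

lemma mc0 : mc 0 0 = 1 := rfl
lemma mc0S (k : ℕ) : mc 0 (k+1) = 0 := rfl
lemma mcS0 (n : ℕ) : mc (n+1) 0 = mc n 1 := rfl
lemma mcSS (n k : ℕ) : mc (n+1) (k+1) = mc n k + mc n (k+2) := rfl


noncomputable def ma (m k : ℕ) : Polynomial ℤ :=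
  ∑ ℓ ∈ range (m+1), Polynomial.C ((m.choose ℓ : ℤ) * mc (m - ℓ) k) * X ^ ℓ

lemma ma_zero (k : ℕ) : ma 0 k = if k = 0 then 1 else 0 := by
  unfold ma
  match k with
  | 0 => simp [mc0]
  | k+1 => simp [mc0S]

lemma ma_eq_zero {m k : ℕ} (h : m < k) : ma m k = 0 := by
  unfold ma
  refine Finset.sum_eq_zero fun ℓ _ => ?_
  rw [mc_eq_zero_of_lt (by omega)]
  simp

lemma ma_diag (m : ℕ) : ma m m = 1 := by
  unfold ma
  rw [Finset.sum_eq_single 0]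
  · simp [mc_self]
  · intro ℓ hℓ hne
    simp only [Finset.mem_range] at hℓ
    rw [mc_eq_zero_of_lt (by omega)]
    simp
  · intro h
    simp at h

lemma ma_step (m k : ℕ) : ma (m+1) k = X * ma m k +
    ∑ ℓ ∈ range (m+1), Polynomial.C ((m.choose ℓ : ℤ) * mc (m - ℓ + 1) k) * X ^ ℓ := by
  unfold ma
  rw [Finset.sum_range_succ' _ (m+1)]
  have h1 : ∀ ℓ ∈ range (m+1),
      Polynomial.C (((m+1).choose (ℓ+1) : ℤ) * mc (m + 1 - (ℓ+1)) k) * X ^ (ℓ+1)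
      = Polynomial.C ((m.choose ℓ : ℤ) * mc (m - ℓ) k) * X ^ ℓ * X
        + Polynomial.C ((m.choose (ℓ+1) : ℤ) * mc (m - ℓ) k) * X ^ (ℓ+1) := by
    intro ℓ hℓ
    have e : m + 1 - (ℓ + 1) = m - ℓ := by omega
    rw [e, Nat.choose_succ_succ m ℓ, Nat.cast_add, add_mul, map_add, add_mul, pow_succ]
    ring
  rw [Finset.sum_congr rfl h1, Finset.sum_add_distrib]
  have h2 : ∑ ℓ ∈ range (m+1), Polynomial.C ((m.choose ℓ : ℤ) * mc (m - ℓ) k) * X ^ ℓ * X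
      = X * ∑ ℓ ∈ range (m+1), Polynomial.C ((m.choose ℓ : ℤ) * mc (m - ℓ) k) * X ^ ℓ := by
    rw [Finset.mul_sum]; exact Finset.sum_congr rfl fun ℓ _ => by ring
  rw [h2]
  have h3 : (∑ ℓ ∈ range (m+1), Polynomial.C ((m.choose (ℓ+1) : ℤ) * mc (m - ℓ) k) * X ^ (ℓ+1))
      + Polynomial.C (((m+1).choose 0 : ℤ) * mc (m + 1 - 0) k) * X ^ 0
      = ∑ ℓ ∈ range (m+1), Polynomial.C ((m.choose ℓ : ℤ) * mc (m - ℓ + 1) k) * X ^ ℓ := by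
    rw [Finset.sum_range_succ' (fun ℓ => Polynomial.C ((m.choose ℓ : ℤ) * mc (m - ℓ + 1) k) * X ^ ℓ) m]
    congr 1
    · rw [Finset.sum_range_succ]
      have hz : Polynomial.C ((m.choose (m+1) : ℤ) * mc (m - m) k) * X ^ (m+1) = 0 := by
        rw [Nat.choose_succ_self]
        simp
      rw [hz, add_zero]
      apply Finset.sum_congr rfl
      intro ℓ hℓ
      have e : m - (ℓ + 1) + 1 = m - ℓ := by
        simp at hℓ; omega
      rw [e]
    · simp
  rw [add_assoc, h3]

lemma ma_rec0 (m : ℕ) : ma (m+1) 0 = X * ma m 0 + ma m 1 := by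
  rw [ma_step]
  congr 1

lemma ma_recS (m k : ℕ) : ma (m+1) (k+1) = X * ma m (k+1) + (ma m k + ma m (k+2)) := by
  rw [ma_step]
  congr 1
  unfold ma
  rw [← Finset.sum_add_distrib]
  apply Finset.sum_congr rfl
  intro ℓ _
  rw [mcSS, mul_add, map_add, add_mul]

noncomputable def Mdef (m : ℕ) : Polynomial ℤ :=
  ∑ k ∈ range (m / 2 + 1),
    Polynomial.C ((m.choose (2 * k) * catalan k : ℕ) : ℤ) * X ^ (m - 2 * k)

lemma ma_zero_eq_Mdef (m : ℕ) : ma m 0 = Mdef m := by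
  unfold ma Mdef
  rw [show range (m+1) = range (m+1) from rfl]
  have himg : (range (m / 2 + 1)).image (fun k => m - 2 * k) ⊆ range (m+1) := by
    intro x hx
    simp only [Finset.mem_image, Finset.mem_range] at hx ⊢
    omega
  rw [← Finset.sum_subset himg]
  · rw [Finset.sum_image (by intro x hx y hy hxy; simp at hx hy; simp only at hxy; omega)]
    apply Finset.sum_congr rfl
    intro k hk
    simp only [Finset.mem_range] at hk
    have e1 : m - (m - 2 * k) = 2 * k := by omega
    rw [e1, mc_even_zero, Nat.choose_symm (by omega)]
    push_cast
    ring
  · intro ℓ hℓ hnot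
    simp only [Finset.mem_image, Finset.mem_range] at hℓ hnot
    have hodd : (m - ℓ) % 2 = 1 := by
      by_contra h
      exact hnot ⟨(m - ℓ) / 2, by omega, by omega⟩
    rw [mc_odd_zero _ hodd]
    simp

noncomputable def tri (m : ℕ) : Matrix (Fin m) (Fin m) (Polynomial ℤ) :=
  Matrix.of fun k l => if (k:ℕ) = (l:ℕ) then X else
    if (k:ℕ)+1 = (l:ℕ) ∨ (l:ℕ)+1 = (k:ℕ) then 1 else 0

lemma tri_sub (m : ℕ) : (tri (m+1)).submatrix Fin.succ Fin.succ = tri m := by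
  ext k l
  have h1 : ((k.succ : Fin (m+1)) : ℕ) = (k : ℕ) + 1 := rfl
  have h2 : ((l.succ : Fin (m+1)) : ℕ) = (l : ℕ) + 1 := rfl
  simp only [tri, Matrix.submatrix_apply, Matrix.of_apply, h1, h2]
  by_cases hkl : (k:ℕ) = (l:ℕ)
  · rw [if_pos (by omega), if_pos hkl]
  · rw [if_neg (by omega), if_neg hkl]
    by_cases ho : (k:ℕ)+1 = (l:ℕ) ∨ (l:ℕ)+1 = (k:ℕ)
    · rw [if_pos (by omega), if_pos ho]
    · rw [if_neg (by omega), if_neg ho]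

lemma sa1_zero (m : ℕ) : (((1 : Fin (m+2)).succAbove (0 : Fin (m+1))) : ℕ) = 0 := by
  simp [Fin.succAbove]

lemma sa1_succ (m : ℕ) (l : Fin m) :
    (((1 : Fin (m+2)).succAbove (l.succ : Fin (m+1))) : ℕ) = (l : ℕ) + 2 := by
  simp [Fin.succAbove, Fin.lt_def]

lemma tri_det (F : ℕ → Polynomial ℤ) (hF0 : F 0 = 0) (hF1 : F 1 = 1)
    (hF : ∀ m, F (m + 2) = X * F (m + 1) - F m) :
    ∀ m, (tri m).det = F (m+1) := by
  intro m
  induction m using Nat.strong_induction_on with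
  | _ m ih =>
    match m with
    | 0 => simp [tri, Matrix.det_fin_zero, hF1]
    | 1 =>
      rw [Matrix.det_fin_one, hF 0, hF0, hF1]
      simp [tri]
    | (m+2) =>
      rw [Matrix.det_succ_row_zero, Fin.sum_univ_succ, Fin.sum_univ_succ]
      have hz : ∀ j : Fin m, (-1:Polynomial ℤ)^(((j.succ.succ : Fin (m+2))):ℕ) *
          tri (m+2) 0 j.succ.succ *
          ((tri (m+2)).submatrix Fin.succ (j.succ.succ).succAbove).det = 0 := by
        intro j
        have h1 : ((0 : Fin (m+2)) : ℕ) = 0 := rfl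
        have h2 : ((j.succ.succ : Fin (m+2)) : ℕ) = (j : ℕ) + 2 := rfl
        have : tri (m+2) 0 j.succ.succ = 0 := by
          simp only [tri, Matrix.of_apply, h1, h2]
          rw [if_neg (by omega), if_neg (by omega)]
        rw [this]; ring
      rw [Finset.sum_congr rfl (fun j _ => hz j), Finset.sum_const_zero, add_zero]
      have h00 : tri (m+2) 0 0 = X := by
        have h1 : ((0 : Fin (m+2)) : ℕ) = 0 := rfl
        simp only [tri, Matrix.of_apply, h1]
        norm_num
      have h01 : tri (m+2) 0 (Fin.succ 0) = 1 := by
        have h1 : ((0 : Fin (m+2)) : ℕ) = 0 := rfl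
        have h2 : ((Fin.succ (0 : Fin (m+1)) : Fin (m+2)) : ℕ) = 1 := rfl
        simp only [tri, Matrix.of_apply, h1, h2]
        norm_num
      rw [h00, h01]
      have hsub0 : ((tri (m+2)).submatrix Fin.succ ((0 : Fin (m+2)).succAbove)).det
          = F (m+2) := by
        rw [Fin.succAbove_zero, tri_sub, ih (m+1) (by omega)]
      have hsub1 : ((tri (m+2)).submatrix Fin.succ ((Fin.succ 0 : Fin (m+2)).succAbove)).det
          = F (m+1) := by
        have hone : (Fin.succ 0 : Fin (m+2)) = 1 := rfl
        rw [hone]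
        set B := (tri (m+2)).submatrix Fin.succ ((1 : Fin (m+2)).succAbove) with hB
        rw [Matrix.det_succ_column_zero, Fin.sum_univ_succ]
        have hz2 : ∀ i : Fin m, (-1:Polynomial ℤ)^(((i.succ : Fin (m+1))):ℕ) *
            B i.succ 0 * (B.submatrix (i.succ).succAbove Fin.succ).det = 0 := by
          intro i
          have h2 : ((i.succ.succ : Fin (m+2)) : ℕ) = (i : ℕ) + 2 := rfl
          have : B i.succ 0 = 0 := by
            simp only [hB, Matrix.submatrix_apply, tri, Matrix.of_apply, h2, sa1_zero]
            rw [if_neg (by omega), if_neg (by omega)]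
          rw [this]; ring
        rw [Finset.sum_congr rfl (fun i _ => hz2 i), Finset.sum_const_zero, add_zero]
        have hB00 : B 0 0 = 1 := by
          have h2 : ((Fin.succ (0 : Fin (m+1)) : Fin (m+2)) : ℕ) = 1 := rfl
          simp only [hB, Matrix.submatrix_apply, tri, Matrix.of_apply, h2, sa1_zero]
          norm_num
        have hBsub : B.submatrix ((0 : Fin (m+1)).succAbove) Fin.succ = tri m := by
          rw [Fin.succAbove_zero]
          ext k l
          have h1 : ((k.succ.succ : Fin (m+2)) : ℕ) = (k : ℕ) + 2 := rfl
          simp only [hB, Matrix.submatrix_apply, tri, Matrix.of_apply, h1, sa1_succ]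
          by_cases hkl : (k:ℕ) = (l:ℕ)
          · rw [if_pos (by omega), if_pos hkl]
          · rw [if_neg (by omega), if_neg hkl]
            by_cases ho : (k:ℕ)+1 = (l:ℕ) ∨ (l:ℕ)+1 = (k:ℕ)
            · rw [if_pos (by omega), if_pos ho]
            · rw [if_neg (by omega), if_neg ho]
        rw [hB00, hBsub, ih m (by omega)]
        simp
      rw [hsub0, hsub1, hF (m+1)]
      have hv0 : (((0 : Fin (m+2))) : ℕ) = 0 := rfl
      have hv1 : ((Fin.succ (0 : Fin (m+1)) : Fin (m+2)) : ℕ) = 1 := rfl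
      rw [hv0, hv1]
      ring

lemma boundary (f g : ℕ → Polynomial ℤ) (N : ℕ) (hf : f (N+2) = 0) :
    f 1 * g 0 + ∑ k ∈ range (N+1), f (k+2) * g (k+1)
      = ∑ k ∈ range (N+1), f (k+1) * g k := by
  have h := Finset.sum_range_succ' (fun k => f (k+1) * g k) (N+1)
  have h2 := Finset.sum_range_succ (fun k => f (k+1) * g k) (N+1)
  rw [h2, hf, zero_mul, add_zero] at h
  simp only [zero_add, show ∀ k:ℕ, k+1+1 = k+2 from fun _ => rfl] at h
  rw [h]
  ring

lemma shift_sym (i j N : ℕ) (hi : i ≤ N) (hj : j ≤ N) :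
    ∑ k ∈ range (N+2), ma (i+1) k * ma j k
      = ∑ k ∈ range (N+2), ma i k * ma (j+1) k := by
  rw [Finset.sum_range_succ' _ (N+1), Finset.sum_range_succ' _ (N+1)]
  have e1 : ∀ k ∈ range (N+1), ma (i+1) (k+1) * ma j (k+1)
      = X * ma i (k+1) * ma j (k+1)
        + (ma i k * ma j (k+1) + ma i (k+2) * ma j (k+1)) := by
    intro k _
    rw [ma_recS]
    ring
  have e2 : ∀ k ∈ range (N+1), ma i (k+1) * ma (j+1) (k+1)
      = X * ma i (k+1) * ma j (k+1)
        + (ma i (k+1) * ma j k + ma j (k+2) * ma i (k+1)) := by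
    intro k _
    rw [ma_recS]
    ring
  rw [Finset.sum_congr rfl e1, Finset.sum_congr rfl e2,
    Finset.sum_add_distrib, Finset.sum_add_distrib,
    Finset.sum_add_distrib, Finset.sum_add_distrib, ma_rec0, ma_rec0]
  have q1 : ma i 1 * ma j 0 + ∑ k ∈ range (N+1), ma i (k+2) * ma j (k+1)
      = ∑ k ∈ range (N+1), ma i (k+1) * ma j k :=
    boundary (ma i) (ma j) N (ma_eq_zero (by omega))
  have q2 : ma j 1 * ma i 0 + ∑ k ∈ range (N+1), ma j (k+2) * ma i (k+1)
      = ∑ k ∈ range (N+1), ma j (k+1) * ma i k :=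
    boundary (ma j) (ma i) N (ma_eq_zero (by omega))
  have q2c : ∑ k ∈ range (N+1), ma j (k+1) * ma i k
      = ∑ k ∈ range (N+1), ma i k * ma j (k+1) :=
    Finset.sum_congr rfl fun k _ => mul_comm _ _
  linear_combination q1 - q2 - q2c

lemma concat : ∀ j i : ℕ, ∑ k ∈ range (i+j+1), ma i k * ma j k = ma (i+j) 0 := by
  intro j
  induction j with
  | zero =>
    intro i
    rw [Finset.sum_eq_single 0]
    · rw [ma_zero, if_pos rfl, mul_one, add_zero]
    · intro b _ hb
      rw [ma_zero, if_neg hb, mul_zero]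
    · intro h
      simp at h
  | succ j ihj =>
    intro i
    have e : i + (j+1) + 1 = (i + j) + 2 := by omega
    rw [e, ← shift_sym i j (i+j) (by omega) (by omega)]
    have e2 : (i+j)+2 = (i+1) + j + 1 := by omega
    rw [e2, ihj (i+1)]
    congr 1
    omega

lemma sum_trunc (i : ℕ) (g : ℕ → Polynomial ℤ) {N : ℕ} (h : i < N) :
    ∑ k ∈ range N, ma i k * g k = ∑ k ∈ range (i+1), ma i k * g k := by
  symm
  apply Finset.sum_subset (Finset.range_subset_range.mpr (by omega))
  intro x _ hx
  simp only [Finset.mem_range, not_lt] at hx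
  rw [ma_eq_zero (by omega), zero_mul]

lemma concat' (i j N : ℕ) (hiN : i < N) :
    ∑ k ∈ range N, ma i k * ma j k = ma (i+j) 0 := by
  rw [sum_trunc i _ hiN, ← sum_trunc i _ (show i < i+j+1 by omega), concat]

lemma inner (n j k : ℕ) (hj : j ≤ n) (hk : k ≤ n) :
    ∑ l ∈ range (n+1),
      (if k = l then X else if k+1 = l ∨ l+1 = k then 1 else 0) * ma j l
      = ma (j+1) k := by
  have split : ∀ l, (if k = l then X else if k+1 = l ∨ l+1 = k then (1 : Polynomial ℤ) else 0) * ma j l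
      = (if k = l then X * ma j l else 0)
        + ((if k+1 = l then ma j l else 0) + (if l+1 = k then ma j l else 0)) := by
    intro l
    by_cases h1 : k = l
    · rw [if_pos h1, if_pos h1, if_neg (by omega), if_neg (by omega)]
      ring
    · rw [if_neg h1, if_neg h1]
      by_cases h2 : k+1 = l
      · rw [if_pos (by omega), if_pos h2, if_neg (by omega)]
        ring
      · by_cases h3 : l+1 = k
        · rw [if_pos (by omega), if_neg h2, if_pos h3]
          ring
        · rw [if_neg (by omega), if_neg h2, if_neg h3]
          ring
  rw [Finset.sum_congr rfl (fun l _ => split l), Finset.sum_add_distrib,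
    Finset.sum_add_distrib]
  rw [Finset.sum_ite_eq (range (n+1)) k (fun l => X * ma j l),
    if_pos (Finset.mem_range.mpr (by omega))]
  rw [Finset.sum_ite_eq (range (n+1)) (k+1) (fun l => ma j l)]
  have hmid : (if k+1 ∈ range (n+1) then ma j (k+1) else 0) = ma j (k+1) := by
    by_cases h : k+1 ∈ range (n+1)
    · rw [if_pos h]
    · rw [if_neg h]
      simp only [Finset.mem_range, not_lt] at h
      rw [ma_eq_zero (by omega)]
  rw [hmid]
  match k with
  | 0 =>
    have hz : ∀ l ∈ range (n+1), (if l+1 = 0 then ma j l else 0) = 0 := by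
      intro l _
      rw [if_neg (by omega)]
    rw [Finset.sum_congr rfl hz, Finset.sum_const_zero, add_zero, ma_rec0]
  | (k'+1) =>
    have hc : ∀ l ∈ range (n+1), (if l+1 = k'+1 then ma j l else 0)
        = (if k' = l then ma j l else 0) := by
      intro l _
      by_cases h : k' = l
      · rw [if_pos (by omega), if_pos h]
      · rw [if_neg (by omega), if_neg h]
    rw [Finset.sum_congr rfl hc, Finset.sum_ite_eq (range (n+1)) k' (fun l => ma j l),
      if_pos (Finset.mem_range.mpr (by omega)), ma_recS]
    ring

theorem motzkin_poly_shifted_hankel_det (n : ℕ)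
    (M : ℕ → Polynomial ℤ)
    (hM : ∀ m, M m = ∑ k ∈ range (m / 2 + 1),
        Polynomial.C ((m.choose (2 * k) * catalan k : ℕ) : ℤ) * X ^ (m - 2 * k))
    (F : ℕ → Polynomial ℤ)
    (hF0 : F 0 = 0) (hF1 : F 1 = 1)
    (hF : ∀ m, F (m + 2) = X * F (m + 1) - F m) :
    (Matrix.of fun i j : Fin (n + 1) => M ((i : ℕ) + (j : ℕ) + 1)).det = F (n + 2) := by
  have hMdef : ∀ m, M m = ma m 0 := fun m => by
    rw [hM m, ma_zero_eq_Mdef]; rfl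
  set A : Matrix (Fin (n+1)) (Fin (n+1)) (Polynomial ℤ) :=
    Matrix.of (fun i k : Fin (n+1) => ma (i : ℕ) (k : ℕ)) with hA
  have hfact : (Matrix.of fun i j : Fin (n + 1) => M ((i : ℕ) + (j : ℕ) + 1))
      = A * (tri (n+1) * A.transpose) := by
    refine Matrix.ext fun i j => ?_
    rw [Matrix.mul_apply]
    have hin : ∀ k : Fin (n+1), (tri (n+1) * A.transpose) k j = ma ((j:ℕ)+1) (k:ℕ) := by
      intro k
      rw [Matrix.mul_apply]
      have : ∀ l : Fin (n+1), tri (n+1) k l * A.transpose l j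
          = (fun l : ℕ => (if (k:ℕ) = l then X else
              if (k:ℕ)+1 = l ∨ l+1 = (k:ℕ) then 1 else 0) * ma (j:ℕ) l) (l : ℕ) := by
        intro l
        simp only [tri, hA, Matrix.of_apply, Matrix.transpose_apply]
      rw [Finset.sum_congr rfl (fun l _ => this l)]
      exact (Fin.sum_univ_eq_sum_range (fun l : ℕ => (if (k:ℕ) = l then X else
        if (k:ℕ)+1 = l ∨ l+1 = (k:ℕ) then 1 else 0) * ma (j:ℕ) l) (n+1)).trans
        (inner n j k j.is_le k.is_le)
    rw [Finset.sum_congr rfl (fun k _ => by rw [hin k])]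
    have : ∀ k : Fin (n+1), A i k * ma ((j:ℕ)+1) (k:ℕ)
        = (fun k : ℕ => ma (i:ℕ) k * ma ((j:ℕ)+1) k) (k : ℕ) := by
      intro k
      simp only [hA, Matrix.of_apply]
    rw [Finset.sum_congr rfl (fun k _ => this k)]
    rw [Matrix.of_apply, hMdef]
    symm
    refine ((Fin.sum_univ_eq_sum_range (fun k : ℕ => ma (i:ℕ) k * ma ((j:ℕ)+1) k)
      (n+1)).trans ?_)
    rw [concat' (i:ℕ) ((j:ℕ)+1) (n+1) (by omega)]
    congr 1
  rw [hfact, Matrix.det_mul, Matrix.det_mul, Matrix.det_transpose]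
  have hdetA : A.det = 1 := by
    rw [Matrix.det_of_lowerTriangular A (fun i j hij => by
      simp only [hA, Matrix.of_apply]
      exact ma_eq_zero hij)]
    rw [Finset.prod_congr rfl (fun i _ => by
      simp only [hA, Matrix.of_apply]; exact ma_diag (i:ℕ))]
    exact Finset.prod_const_one
  rw [hdetA, tri_det F hF0 hF1 hF (n+1)]
  ring
end
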